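/- Let Π and Y be symmetric positive definite m×m real matrices with m ≥ 2, and set γ = 1 − (det(I + Π Y))^{−1/2}. Then 1 − (1 + tr(Π Y))^{−1/2} < γ < 1 − exp(−½ tr(Π Y)). -/

import Mathlib

open Matrix

private lemma one_add_sum_le_prod {ι : Type*} (s : Finset ι) (f : ι → ℝ)
    (hf : ∀ i ∈ s, 0 ≤ f i) : 1 + ∑ i ∈ s, f i ≤ ∏ i ∈ s, (1 + f i) := by
  classical
  induction s using Finset.induction with
  | empty => simp
  | @insert a t hnot ih =>
    rw [Finset.sum_insert hnot, Finset.prod_insert hnot]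
    have hfa : 0 ≤ f a := hf a (Finset.mem_insert_self a t)
    have ht : ∀ i ∈ t, 0 ≤ f i := fun i hi => hf i (Finset.mem_insert_of_mem hi)
    have h1 := ih ht
    have hsum : 0 ≤ ∑ i ∈ t, f i := Finset.sum_nonneg ht
    nlinarith [h1, hfa, hsum]

/-- Bounds on the open-loop communication rate `γ = 1 − (det(I + Π Y))^{−1/2}`
for symmetric positive definite `Π, Y` with `m ≥ 2`:
`1 − (1 + tr(Π Y))^{−1/2} < γ < 1 − exp(−½ tr(Π Y))`. -/
theorem stmt_12 {m : ℕ} (hm : 2 ≤ m) (Pmat Y : Matrix (Fin m) (Fin m) ℝ)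
    (hP : Pmat.PosDef) (hY : Y.PosDef)
    (γ : ℝ) (hγ : γ = 1 - ((1 + Pmat * Y).det) ^ (-(1 : ℝ) / 2)) :
    1 - (1 + (Pmat * Y).trace) ^ (-(1 : ℝ) / 2) < γ ∧
      γ < 1 - Real.exp (-(1 / 2) * (Pmat * Y).trace) := by
  classical
  obtain ⟨S, hS, hSS⟩ : ∃ S : Matrix (Fin m) (Fin m) ℝ, S.PosSemidef ∧ S * S = Pmat := by
    open scoped MatrixOrder in
    exact ⟨CFC.sqrt Pmat, (CFC.sqrt_nonneg Pmat).posSemidef,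
      CFC.sqrt_mul_sqrt_self Pmat hP.posSemidef.nonneg⟩
  have hSH : Sᴴ = S := hS.1
  -- S is invertible
  have hdetP : 0 < Pmat.det := hP.det_pos
  have hdetS : IsUnit S.det := by
    have : S.det * S.det = Pmat.det := by rw [← det_mul, hSS]
    have hne : S.det ≠ 0 := by
      intro h; rw [h, mul_zero] at this; exact (ne_of_gt hdetP) this.symm
    exact isUnit_iff_ne_zero.mpr hne
  have hSinv : S * S⁻¹ = 1 := mul_nonsing_inv S hdetS
  have hinvS : S⁻¹ * S = 1 := nonsing_inv_mul S hdetS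
  set B := S * Y * S with hBdef
  -- B is positive definite
  have hB : B.PosDef := by
    refine Matrix.PosDef.of_dotProduct_mulVec_pos ?_ ?_
    · show Bᴴ = B
      rw [hBdef, conjTranspose_mul, conjTranspose_mul, hSH, hY.1, mul_assoc]
    · intro x hx
      have hSx : S *ᵥ x ≠ 0 := by
        intro h
        apply hx
        have := congrArg (fun v => S⁻¹ *ᵥ v) h
        simpa [mulVec_mulVec, hinvS] using this
      have key : star x ⬝ᵥ B *ᵥ x = star (S *ᵥ x) ⬝ᵥ Y *ᵥ (S *ᵥ x) := by
        rw [hBdef, ← mulVec_mulVec, ← mulVec_mulVec, dotProduct_mulVec, star_mulVec, hSH]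
      rw [key]
      exact hY.dotProduct_mulVec_pos hSx
  -- det and trace identities
  have hdet_eq : (1 + Pmat * Y).det = (1 + B).det := by
    have h1 : (1 : Matrix (Fin m) (Fin m) ℝ) + Pmat * Y = S * (1 + B) * S⁻¹ := by
      have e : S * (1 + B) * S⁻¹ = S * S⁻¹ + S * S * Y * (S * S⁻¹) := by
        rw [hBdef]; noncomm_ring
      rw [e, hSinv, hSS, mul_one]
    rw [h1, det_mul, det_mul, mul_comm, ← mul_assoc, ← det_mul, hinvS, det_one, one_mul]
  have htr_eq : (Pmat * Y).trace = B.trace := by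
    rw [hBdef, ← hSS, mul_assoc, trace_mul_comm]
  -- eigenvalues
  set μ := hB.1.eigenvalues with hμdef
  have hμpos : ∀ i, 0 < μ i := hB.eigenvalues_pos
  have htrB : B.trace = ∑ i, μ i := by
    set U := hB.1.eigenvectorUnitary with hU
    have hspec := hB.1.spectral_theorem
    rw [Unitary.conjStarAlgAut_apply] at hspec
    have hUU : (star (U : Matrix (Fin m) (Fin m) ℝ)) * (U : Matrix (Fin m) (Fin m) ℝ) = 1 :=
      Matrix.mem_unitaryGroup_iff'.mp U.2
    calc B.trace = ((U : Matrix (Fin m) (Fin m) ℝ) * diagonal (RCLike.ofReal ∘ μ)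
          * star (U : Matrix (Fin m) (Fin m) ℝ)).trace := by rw [← hspec]
      _ = (star (U : Matrix (Fin m) (Fin m) ℝ) * (U : Matrix (Fin m) (Fin m) ℝ)
          * diagonal (RCLike.ofReal ∘ μ)).trace := by rw [trace_mul_cycle]
      _ = ∑ i, μ i := by rw [hUU, one_mul, trace_diagonal]; simp
  have hdetB : (1 + B).det = ∏ i, (1 + μ i) := by
    set U := hB.1.eigenvectorUnitary with hU
    have hspec := hB.1.spectral_theorem
    rw [Unitary.conjStarAlgAut_apply] at hspec
    have hUU : (star (U : Matrix (Fin m) (Fin m) ℝ)) * (U : Matrix (Fin m) (Fin m) ℝ) = 1 :=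
      Matrix.mem_unitaryGroup_iff'.mp U.2
    have hUU' : (U : Matrix (Fin m) (Fin m) ℝ) * (star (U : Matrix (Fin m) (Fin m) ℝ)) = 1 :=
      Matrix.mem_unitaryGroup_iff.mp U.2
    have h1 : (1 : Matrix (Fin m) (Fin m) ℝ) + B = (U : Matrix (Fin m) (Fin m) ℝ)
        * (1 + diagonal (RCLike.ofReal ∘ μ)) * star (U : Matrix (Fin m) (Fin m) ℝ) := by
      rw [mul_add, mul_one, add_mul, hUU', ← hspec]
    rw [h1, det_mul, det_mul, mul_comm, ← mul_assoc, ← det_mul, hUU, det_one, one_mul]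
    have : (1 : Matrix (Fin m) (Fin m) ℝ) + diagonal (RCLike.ofReal ∘ μ)
        = diagonal (fun i => 1 + μ i) := by
      rw [← diagonal_one, diagonal_add]
      congr 1
    rw [this, det_diagonal]
  set t := ∑ i, μ i with htdef
  set d := ∏ i, (1 + μ i) with hddef
  have ht_pos : 0 < t := Finset.sum_pos (fun i _ => hμpos i) (Finset.univ_nonempty_iff.mpr
    ⟨⟨0, by omega⟩⟩)
  -- strict AM bound: 1 + t < d
  have hlt1 : 1 + t < d := by
    have h0 : (⟨0, by omega⟩ : Fin m) ∈ Finset.univ := Finset.mem_univ _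
    set i0 : Fin m := ⟨0, by omega⟩
    have hsplit : (Finset.univ : Finset (Fin m)) = insert i0 (Finset.univ.erase i0) := by
      rw [Finset.insert_erase h0]
    have hne : (Finset.univ.erase i0).Nonempty := by
      refine ⟨⟨1, by omega⟩, ?_⟩
      simp [i0, Fin.ext_iff]
    have hSpos : 0 < ∑ i ∈ Finset.univ.erase i0, μ i :=
      Finset.sum_pos (fun i _ => hμpos i) hne
    have hprod : 1 + ∑ i ∈ Finset.univ.erase i0, μ i
        ≤ ∏ i ∈ Finset.univ.erase i0, (1 + μ i) :=
      one_add_sum_le_prod _ _ (fun i _ => (hμpos i).le)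
    rw [htdef, hddef, hsplit, Finset.sum_insert (Finset.notMem_erase _ _),
      Finset.prod_insert (Finset.notMem_erase _ _)]
    nlinarith [hμpos i0, hSpos, hprod]
  -- exponential bound: d < exp t
  have hlt2 : d < Real.exp t := by
    rw [hddef, htdef, Real.exp_sum]
    refine Finset.prod_lt_prod_of_nonempty (fun i _ => by linarith [hμpos i])
      (fun i _ => ?_) (Finset.univ_nonempty_iff.mpr ⟨⟨0, by omega⟩⟩)
    have := Real.add_one_lt_exp (ne_of_gt (hμpos i))
    linarith
  have hd1 : (1:ℝ) < d := by linarith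
  have hγ' : γ = 1 - d ^ (-(1:ℝ)/2) := by rw [hγ, hdet_eq, hdetB]
  have htr' : (Pmat * Y).trace = t := by rw [htr_eq, htrB]
  constructor
  · rw [hγ', htr']
    have : d ^ (-(1:ℝ)/2) < (1 + t) ^ (-(1:ℝ)/2) :=
      Real.rpow_lt_rpow_of_neg (by linarith) hlt1 (by norm_num)
    linarith
  · rw [hγ', htr']
    have hkey : Real.exp t ^ (-(1:ℝ)/2) < d ^ (-(1:ℝ)/2) :=
      Real.rpow_lt_rpow_of_neg (by linarith) hlt2 (by norm_num)
    have hexp : Real.exp t ^ (-(1:ℝ)/2) = Real.exp (-(1/2) * t) := by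
      rw [← Real.exp_mul]
      ring_nf
    linarith [hexp ▸ hkey]
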